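/- Let n ≥ 3 and let C be a reducible relative interaction matrix whose digraph G(C) has exactly the two globally reachable nodes 1 and 2 (necessarily C_{12} = C_{21} = 1). Then every point of the form x* = (α, 1 − α, 0, …, 0) with α ∈ [0,1] is a fixed point of F, the fixed points of F in Δⁿ are exactly these points together with the vertices e_3, …, e_n, and for every initial condition x(0) ∈ Δⁿ \ {e_1, …, e_n} the iterates x(t+1) = F(x(t)) converge exponentially to a point of the form (α, 1 − α, 0, …, 0). -/

import Mathlib

/-- The simplex Δⁿ = {x ∈ ℝⁿ : xᵢ ≥ 0, ∑ᵢ xᵢ = 1}. -/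
def simplex (n : ℕ) : Set (Fin n → ℝ) :=
  {x | (∀ i, 0 ≤ x i) ∧ ∑ i, x i = 1}

/-- The i-th vertex (standard basis vector) of the simplex. -/
def vertex (n : ℕ) (i : Fin n) : Fin n → ℝ := fun j => if j = i then 1 else 0

/-- A relative interaction matrix: nonnegative, row-stochastic, zero diagonal. -/
def IsRIM {n : ℕ} (C : Matrix (Fin n) (Fin n) ℝ) : Prop :=
  (∀ i j, 0 ≤ C i j) ∧ (∀ i, ∑ j, C i j = 1) ∧ (∀ i, C i i = 0)

/-- The single-timescale DeGroot–Friedkin map F(x) = Cᵀ(x − x²) + x². -/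
noncomputable def DF {n : ℕ} (C : Matrix (Fin n) (Fin n) ℝ) (x : Fin n → ℝ) : Fin n → ℝ :=
  fun i => ∑ j, C j i * (x j - (x j) ^ 2) + (x i) ^ 2

/-- A nonnegative matrix is irreducible if for all i ≠ j some power has positive (i,j) entry. -/
def Irred {n : ℕ} (C : Matrix (Fin n) (Fin n) ℝ) : Prop :=
  ∀ i j : Fin n, i ≠ j → ∃ k, 1 ≤ k ∧ 0 < (C ^ k) i j

/-- Node i is globally reachable in G(C): every other node reaches i. -/
def GloballyReachable {n : ℕ} (C : Matrix (Fin n) (Fin n) ℝ) (i : Fin n) : Prop :=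
  ∀ j, j ≠ i → ∃ k, 1 ≤ k ∧ 0 < (C ^ k) j i

/-- The point (α, 1 − α, 0, …, 0). -/
noncomputable def pt (n : ℕ) (α : ℝ) : Fin n → ℝ :=
  fun i => if (i : ℕ) = 0 then α else if (i : ℕ) = 1 then 1 - α else 0

open Finset

variable {n : ℕ} {C : Matrix (Fin n) (Fin n) ℝ}

lemma sdf_pow_nonneg (h : ∀ i j, 0 ≤ C i j) : ∀ k i j, 0 ≤ (C ^ k) i j := by
  intro k
  induction k with
  | zero => intro i j; simp [Matrix.one_apply]; split <;> norm_num
  | succ k ih =>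
    intro i j
    rw [pow_succ, Matrix.mul_apply]
    exact Finset.sum_nonneg fun l _ => mul_nonneg (ih i l) (h l j)

lemma sdf_pow_row (h1 : ∀ i, ∑ j, C i j = 1) : ∀ k i, ∑ j, (C ^ k) i j = 1 := by
  intro k
  induction k with
  | zero => intro i; simp [Matrix.one_apply]
  | succ k ih =>
    intro i
    simp only [pow_succ, Matrix.mul_apply]
    rw [Finset.sum_comm]
    calc ∑ l, ∑ j, (C ^ k) i l * C l j = ∑ l, (C ^ k) i l * ∑ j, C l j := by
          simp [Finset.mul_sum]
      _ = 1 := by simp [h1, ih i]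

lemma sdf_pow_mul_le (h : ∀ i j, 0 ≤ C i j) (a b : ℕ) (i l j : Fin n) :
    (C ^ a) i l * (C ^ b) l j ≤ (C ^ (a + b)) i j := by
  rw [pow_add, Matrix.mul_apply]
  exact Finset.single_le_sum
    (fun m _ => mul_nonneg (sdf_pow_nonneg h a i m) (sdf_pow_nonneg h b m j)) (mem_univ l)

lemma sdf_simplex_le_one {x : Fin n → ℝ} (hx : x ∈ simplex n) (i : Fin n) : x i ≤ 1 := by
  obtain ⟨h0, h1⟩ := hx
  calc x i ≤ ∑ j, x j := Finset.single_le_sum (fun j _ => h0 j) (mem_univ i)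
    _ = 1 := h1

lemma sdf_simplex_vertex {x : Fin n → ℝ} (hx : x ∈ simplex n) {i : Fin n} (hi : x i = 1) :
    x = vertex n i := by
  obtain ⟨h0, h1⟩ := hx
  have key : ∀ j, j ≠ i → x j = 0 := by
    intro j hj
    have h2 : x i + x j ≤ ∑ k, x k := by
      have : ({i, j} : Finset (Fin n)) ⊆ univ := subset_univ _
      calc x i + x j = ∑ k ∈ ({i, j} : Finset (Fin n)), x k := by
            rw [Finset.sum_pair (Ne.symm hj)]
        _ ≤ ∑ k, x k := Finset.sum_le_sum_of_subset_of_nonneg this (fun k _ _ => h0 k)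
    have := h0 j
    rw [h1] at h2
    linarith
  funext j
  by_cases hj : j = i
  · subst hj; simp [vertex, hi]
  · simp [vertex, hj, key j hj]
variable {n : ℕ} {C : Matrix (Fin n) (Fin n) ℝ}

lemma sdf_split (hn : 3 ≤ n) {i0 i1 : Fin n} (h0 : (i0 : ℕ) = 0) (h1 : (i1 : ℕ) = 1)
    (f : Fin n → ℝ) :
    ∑ i, f i = f i0 + f i1 + ∑ i ∈ Finset.univ.filter (fun i : Fin n => 2 ≤ (i : ℕ)), f i := by
  classical
  have hne : i0 ≠ i1 := by
    intro h; rw [h] at h0; omega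
  have h2 : Finset.univ.filter (fun i : Fin n => ¬ 2 ≤ (i : ℕ)) = {i0, i1} := by
    ext i
    simp only [Finset.mem_filter, Finset.mem_univ, true_and, Finset.mem_insert,
      Finset.mem_singleton, Fin.ext_iff, h0, h1]
    omega
  have := Finset.sum_filter_add_sum_filter_not Finset.univ (fun i : Fin n => 2 ≤ (i : ℕ)) f
  rw [h2, Finset.sum_pair hne] at this
  linarith

lemma sdf_rows (hn : 3 ≤ n) (hC : IsRIM C)
    (hgr : ∀ i : Fin n, GloballyReachable C i ↔ (i : ℕ) < 2)
    {i0 i1 : Fin n} (h0 : (i0 : ℕ) = 0) (h1 : (i1 : ℕ) = 1) :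
    (∀ j, j ≠ i1 → C i0 j = 0) ∧ (∀ j, j ≠ i0 → C i1 j = 0) ∧
      C i0 i1 = 1 ∧ C i1 i0 = 1 := by
  classical
  obtain ⟨hpos, hrow, hdiag⟩ := hC
  have hne : i0 ≠ i1 := by intro h; rw [h] at h0; omega
  have hgr0 : GloballyReachable C i0 := (hgr i0).mpr (by omega)
  have hgr1 : GloballyReachable C i1 := (hgr i1).mpr (by omega)
  -- generic: if a globally reachable node has an edge to j then j is globally reachable
  have key : ∀ a j : Fin n, GloballyReachable C a → j ≠ a → 0 < C a j →
      GloballyReachable C j := by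
    intro a j hga hja hpos'
    intro m hm
    by_cases hma : m = a
    · exact ⟨1, le_refl 1, by rw [pow_one, hma]; exact hpos'⟩
    · obtain ⟨k, hk1, hk⟩ := hga m hma
      refine ⟨k + 1, by omega, ?_⟩
      have h2 := sdf_pow_mul_le hpos k 1 m a j
      rw [pow_one] at h2
      have : 0 < (C ^ k) m a * C a j := mul_pos hk hpos'
      linarith
  have hzero : ∀ a j : Fin n, GloballyReachable C a → 2 ≤ (j : ℕ) → C a j = 0 := by
    intro a j hga hj2
    by_contra hne'
    have hpos' : 0 < C a j := lt_of_le_of_ne (hpos a j) (Ne.symm hne')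
    have hja : j ≠ a := by
      intro h; subst h; rw [hdiag] at hpos'; exact lt_irrefl 0 hpos'
    have := (hgr j).mp (key a j hga hja hpos')
    omega
  have hrow0 : ∀ j, j ≠ i1 → C i0 j = 0 := by
    intro j hj
    by_cases hj0 : j = i0
    · rw [hj0]; exact hdiag i0
    · have : 2 ≤ (j : ℕ) := by
        have a := Fin.ext_iff.not.mp hj0
        have b := Fin.ext_iff.not.mp hj
        rw [h0] at a; rw [h1] at b; omega
      exact hzero i0 j hgr0 this
  have hrow1 : ∀ j, j ≠ i0 → C i1 j = 0 := by
    intro j hj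
    by_cases hj1 : j = i1
    · rw [hj1]; exact hdiag i1
    · have : 2 ≤ (j : ℕ) := by
        have a := Fin.ext_iff.not.mp hj
        have b := Fin.ext_iff.not.mp hj1
        rw [h0] at a; rw [h1] at b; omega
      exact hzero i1 j hgr1 this
  refine ⟨hrow0, hrow1, ?_, ?_⟩
  · have := sdf_split hn h0 h1 (fun j => C i0 j)
    rw [hrow i0] at this
    have hS : ∑ j ∈ Finset.univ.filter (fun i : Fin n => 2 ≤ (i : ℕ)), C i0 j = 0 := by
      apply Finset.sum_eq_zero
      intro j hj
      simp only [Finset.mem_filter] at hj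
      apply hrow0
      intro h; rw [h, h1] at hj; omega
    rw [hdiag i0, hS] at this
    linarith
  · have := sdf_split hn h0 h1 (fun j => C i1 j)
    rw [hrow i1] at this
    have hS : ∑ j ∈ Finset.univ.filter (fun i : Fin n => 2 ≤ (i : ℕ)), C i1 j = 0 := by
      apply Finset.sum_eq_zero
      intro j hj
      simp only [Finset.mem_filter] at hj
      apply hrow1
      intro h; rw [h, h0] at hj; omega
    rw [hdiag i1, hS] at this
    linarith
lemma sdf_closed {i0 i1 : Fin n} (h0 : (i0 : ℕ) = 0) (h1 : (i1 : ℕ) = 1)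
    (hrow0 : ∀ j, j ≠ i1 → C i0 j = 0) (hrow1 : ∀ j, j ≠ i0 → C i1 j = 0) :
    ∀ k, ∀ j : Fin n, 2 ≤ (j : ℕ) → (C ^ k) i0 j = 0 ∧ (C ^ k) i1 j = 0 := by
  intro k
  induction k with
  | zero =>
    intro j hj
    constructor <;>
    · simp only [pow_zero, Matrix.one_apply]
      rw [if_neg]
      intro h
      rw [Fin.ext_iff] at h
      omega
  | succ k ih =>
    intro j hj
    constructor
    · rw [pow_succ', Matrix.mul_apply]
      rw [Finset.sum_eq_single_of_mem i1 (Finset.mem_univ _)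
        (fun l _ hl => by rw [hrow0 l hl]; ring)]
      rw [(ih j hj).2, mul_zero]
    · rw [pow_succ', Matrix.mul_apply]
      rw [Finset.sum_eq_single_of_mem i0 (Finset.mem_univ _)
        (fun l _ hl => by rw [hrow1 l hl]; ring)]
      rw [(ih j hj).1, mul_zero]

lemma sdf_hmono (hpos : ∀ i j, 0 ≤ C i j) {i0 i1 : Fin n}
    (hC01 : C i0 i1 = 1) (hC10 : C i1 i0 = 1) (j : Fin n) :
    Monotone (fun k => (C ^ k) j i0 + (C ^ k) j i1) := by
  apply monotone_nat_of_le_succ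
  intro k
  have e0 : (C ^ k) j i1 ≤ (C ^ (k + 1)) j i0 := by
    have := sdf_pow_mul_le hpos k 1 j i1 i0
    rw [pow_one, hC10, mul_one] at this
    exact this
  have e1 : (C ^ k) j i0 ≤ (C ^ (k + 1)) j i1 := by
    have := sdf_pow_mul_le hpos k 1 j i0 i1
    rw [pow_one, hC01, mul_one] at this
    exact this
  show (C ^ (k+1)) j i0 + (C ^ (k+1)) j i1 ≥ _
  linarith

lemma sdf_htail (hn : 3 ≤ n) (hpos : ∀ i j, 0 ≤ C i j) (hrow : ∀ i, ∑ j, C i j = 1)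
    {i0 i1 : Fin n} (h0 : (i0 : ℕ) = 0) (h1 : (i1 : ℕ) = 1) (k : ℕ) (j : Fin n) :
    ∑ i ∈ Finset.univ.filter (fun i : Fin n => 2 ≤ (i : ℕ)), (C ^ k) j i
      = 1 - ((C ^ k) j i0 + (C ^ k) j i1) := by
  have := sdf_split hn h0 h1 (fun i => (C ^ k) j i)
  rw [sdf_pow_row hrow k j] at this
  linarith

lemma sdf_hle1 (hn : 3 ≤ n) (hpos : ∀ i j, 0 ≤ C i j) (hrow : ∀ i, ∑ j, C i j = 1)
    {i0 i1 : Fin n} (h0 : (i0 : ℕ) = 0) (h1 : (i1 : ℕ) = 1) (k : ℕ) (j : Fin n) :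
    (C ^ k) j i0 + (C ^ k) j i1 ≤ 1 := by
  have := sdf_htail hn hpos hrow h0 h1 k j
  have h2 : 0 ≤ ∑ i ∈ Finset.univ.filter (fun i : Fin n => 2 ≤ (i : ℕ)), (C ^ k) j i :=
    Finset.sum_nonneg fun i _ => sdf_pow_nonneg hpos k j i
  linarith

lemma sdf_m (hn : 3 ≤ n) (hC : IsRIM C)
    (hgr : ∀ i : Fin n, GloballyReachable C i ↔ (i : ℕ) < 2)
    {i0 i1 : Fin n} (h0 : (i0 : ℕ) = 0) (h1 : (i1 : ℕ) = 1) :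
    ∃ m : ℕ, 1 ≤ m ∧ ∃ δ : ℝ, 0 < δ ∧ δ ≤ 1 ∧
      ∀ j : Fin n, 2 ≤ (j : ℕ) → δ ≤ (C ^ m) j i0 + (C ^ m) j i1 := by
  classical
  obtain ⟨hpos, hrow, hdiag⟩ := hC
  obtain ⟨hrow0, hrow1, hC01, hC10⟩ := sdf_rows hn ⟨hpos, hrow, hdiag⟩ hgr h0 h1
  set S := Finset.univ.filter (fun i : Fin n => 2 ≤ (i : ℕ)) with hS
  have hgr0 : GloballyReachable C i0 := (hgr i0).mpr (by omega)
  have hreach : ∀ j : Fin n, ∃ k, j ∈ S → 0 < (C ^ k) j i0 + (C ^ k) j i1 := by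
    intro j
    by_cases hj : j ∈ S
    · have hj2 : 2 ≤ (j : ℕ) := by simpa [hS] using hj
      have hji0 : j ≠ i0 := by intro h; rw [h, h0] at hj2; omega
      obtain ⟨k, _, hk⟩ := hgr0 j hji0
      exact ⟨k, fun _ => by
        have := sdf_pow_nonneg hpos k j i1
        linarith⟩
    · exact ⟨0, fun h => absurd h hj⟩
  choose K hK using hreach
  set m := max (S.sup K) 1 with hm
  have hm1 : 1 ≤ m := le_max_right _ 1
  have hposm : ∀ j ∈ S, 0 < (C ^ m) j i0 + (C ^ m) j i1 := by
    intro j hj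
    have h2 : K j ≤ m := le_trans (Finset.le_sup hj) (le_max_left _ _)
    exact lt_of_lt_of_le (hK j hj) (sdf_hmono hpos hC01 hC10 j h2)
  have hSne : S.Nonempty := by
    refine ⟨⟨2, by omega⟩, ?_⟩
    simp [hS]
  obtain ⟨j₀, hj₀, hjmin⟩ := S.exists_min_image (fun j => (C ^ m) j i0 + (C ^ m) j i1) hSne
  refine ⟨m, hm1, (C ^ m) j₀ i0 + (C ^ m) j₀ i1, hposm j₀ hj₀,
    sdf_hle1 hn hpos hrow h0 h1 m j₀, ?_⟩
  intro j hj2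
  exact hjmin j (by simp [hS, hj2])
lemma sdf_p (hn : 3 ≤ n) (hC : IsRIM C)
    (hgr : ∀ i : Fin n, GloballyReachable C i ↔ (i : ℕ) < 2)
    {i0 i1 : Fin n} (h0 : (i0 : ℕ) = 0) (h1 : (i1 : ℕ) = 1) :
    ∃ (p : Fin n → ℝ) (mr θ : ℝ), 1 ≤ mr ∧ 0 ≤ θ ∧ θ < 1 ∧
      (∀ i : Fin n, 2 ≤ (i : ℕ) → 1 ≤ p i ∧ p i ≤ mr) ∧
      (∀ i : Fin n, 2 ≤ (i : ℕ) →
        ∑ j ∈ Finset.univ.filter (fun j : Fin n => 2 ≤ (j : ℕ)), C i j * p j ≤ θ * p i) := by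
  classical
  obtain ⟨hpos, hrow, hdiag⟩ := hC
  obtain ⟨hrow0, hrow1, hC01, hC10⟩ := sdf_rows hn ⟨hpos, hrow, hdiag⟩ hgr h0 h1
  obtain ⟨m, hm1, δ, hδ0, hδ1, hδ⟩ := sdf_m hn ⟨hpos, hrow, hdiag⟩ hgr h0 h1
  set S := Finset.univ.filter (fun j : Fin n => 2 ≤ (j : ℕ)) with hS
  set h : Fin n → ℕ → ℝ := fun i k => (C ^ k) i i0 + (C ^ k) i i1 with hh
  have hhle1 : ∀ i k, h i k ≤ 1 := fun i k => sdf_hle1 hn hpos hrow h0 h1 k i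
  have hh0 : ∀ i k, 0 ≤ h i k := fun i k =>
    add_nonneg (sdf_pow_nonneg hpos k i i0) (sdf_pow_nonneg hpos k i i1)
  have hhz : ∀ i : Fin n, 2 ≤ (i : ℕ) → h i 0 = 0 := by
    intro i hi
    simp only [hh, pow_zero, Matrix.one_apply]
    rw [if_neg (by intro h'; rw [Fin.ext_iff] at h'; omega),
      if_neg (by intro h'; rw [Fin.ext_iff] at h'; omega)]
    norm_num
  set p : Fin n → ℝ := fun i => ∑ k ∈ Finset.range m, (1 - h i k) with hp
  have hmr1 : (1 : ℝ) ≤ (m : ℝ) := by exact_mod_cast hm1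
  have hpbd : ∀ i : Fin n, 2 ≤ (i : ℕ) → 1 ≤ p i ∧ p i ≤ (m : ℝ) := by
    intro i hi
    constructor
    · have hsing := Finset.single_le_sum (f := fun k => 1 - h i k)
        (fun k _ => by
          show (0 : ℝ) ≤ 1 - h i k
          have := hhle1 i k; linarith)
        (Finset.mem_range.mpr (by omega : 0 < m))
      rw [hhz i hi] at hsing
      show (1 : ℝ) ≤ ∑ k ∈ Finset.range m, (1 - h i k)
      linarith
    · show (∑ k ∈ Finset.range m, (1 - h i k)) ≤ (m : ℝ)
      calc (∑ k ∈ Finset.range m, (1 - h i k)) ≤ ∑ k ∈ Finset.range m, (1 : ℝ) :=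
            Finset.sum_le_sum (fun k _ => by
              show (1 : ℝ) - h i k ≤ 1
              have := hh0 i k; linarith)
        _ = (m : ℝ) := by simp
  have e1 : ∀ (j : Fin n) (k : ℕ), (1 : ℝ) - h j k = ∑ l ∈ S, (C ^ k) j l := by
    intro j k
    have h2 := sdf_htail hn hpos hrow h0 h1 k j
    show (1 : ℝ) - ((C ^ k) j i0 + (C ^ k) j i1) = ∑ l ∈ S, (C ^ k) j l
    rw [hS]
    linarith
  have hkey : ∀ (i : Fin n) (k : ℕ), 2 ≤ (i : ℕ) →
      ∑ j ∈ S, C i j * (1 - h j k) = 1 - h i (k + 1) := by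
    intro i k hi
    calc ∑ j ∈ S, C i j * (1 - h j k) = ∑ j ∈ S, ∑ l ∈ S, C i j * (C ^ k) j l := by
          apply Finset.sum_congr rfl
          intro j _
          rw [e1 j k, Finset.mul_sum]
      _ = ∑ l ∈ S, ∑ j ∈ S, C i j * (C ^ k) j l := Finset.sum_comm
      _ = ∑ l ∈ S, (C ^ (k + 1)) i l := by
          apply Finset.sum_congr rfl
          intro l hl
          rw [hS] at hl
          have hl2 : 2 ≤ (l : ℕ) := (Finset.mem_filter.mp hl).2
          have hfull := sdf_split hn h0 h1 (fun j => C i j * (C ^ k) j l)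
          have hc := sdf_closed h0 h1 hrow0 hrow1 k l hl2
          rw [hc.1, hc.2] at hfull
          have hpow : (C ^ (k + 1)) i l = ∑ j, C i j * (C ^ k) j l := by
            rw [pow_succ', Matrix.mul_apply]
          rw [hpow, hS]
          linarith
      _ = 1 - h i (k + 1) := (e1 i (k + 1)).symm
  have hAp : ∀ i : Fin n, 2 ≤ (i : ℕ) → ∑ j ∈ S, C i j * p j = p i - h i m := by
    intro i hi
    have step1 : ∑ j ∈ S, C i j * p j = ∑ k ∈ Finset.range m, (1 - h i (k + 1)) := by
      calc ∑ j ∈ S, C i j * p j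
          = ∑ j ∈ S, ∑ k ∈ Finset.range m, C i j * (1 - h j k) := by
            apply Finset.sum_congr rfl
            intro j _
            rw [hp, Finset.mul_sum]
        _ = ∑ k ∈ Finset.range m, ∑ j ∈ S, C i j * (1 - h j k) := Finset.sum_comm
        _ = ∑ k ∈ Finset.range m, (1 - h i (k + 1)) := by
            exact Finset.sum_congr rfl fun k _ => hkey i k hi
    have tele : ∑ k ∈ Finset.range m, (1 - h i (k + 1))
        = (∑ k ∈ Finset.range m, (1 - h i k)) + (1 - h i m) - (1 - h i 0) := by
      have a := Finset.sum_range_succ (fun k => 1 - h i k) m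
      have b := Finset.sum_range_succ' (fun k => 1 - h i k) m
      linarith
    rw [step1, tele, hhz i hi]
    show (∑ k ∈ Finset.range m, (1 - h i k)) + (1 - h i m) - (1 - 0)
        = (∑ k ∈ Finset.range m, (1 - h i k)) - h i m
    ring
  refine ⟨p, (m : ℝ), 1 - δ / (m : ℝ), hmr1, ?_, ?_, hpbd, ?_⟩
  · have h2 : δ / (m : ℝ) ≤ 1 := by
      rw [div_le_one (by linarith)]
      linarith
    linarith
  · have h2 : 0 < δ / (m : ℝ) := div_pos hδ0 (by linarith)
    linarith
  · intro i hi
    obtain ⟨hp1, hpm⟩ := hpbd i hi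
    rw [hAp i hi]
    have hδm : (δ / (m : ℝ)) * p i ≤ δ := by
      calc (δ / (m : ℝ)) * p i ≤ (δ / (m : ℝ)) * (m : ℝ) := by
            apply mul_le_mul_of_nonneg_left hpm
            positivity
        _ = δ := by field_simp
    have := hδ i hi
    have hhi : δ ≤ h i m := by rw [hh]; exact this
    nlinarith
lemma sdf_pt_apply {α : ℝ} {i0 i1 : Fin n} (h0 : (i0 : ℕ) = 0) (h1 : (i1 : ℕ) = 1) :
    pt n α i0 = α ∧ pt n α i1 = 1 - α ∧ ∀ j : Fin n, 2 ≤ (j : ℕ) → pt n α j = 0 := by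
  refine ⟨by simp [pt, h0], by simp [pt, h1], fun j hj => by
    simp only [pt]
    rw [if_neg (by omega), if_neg (by omega)]⟩

lemma sdf_part1 (hn : 3 ≤ n) (hC : IsRIM C)
    (hgr : ∀ i : Fin n, GloballyReachable C i ↔ (i : ℕ) < 2)
    {i0 i1 : Fin n} (h0 : (i0 : ℕ) = 0) (h1 : (i1 : ℕ) = 1) (α : ℝ) :
    DF C (pt n α) = pt n α := by
  classical
  obtain ⟨hpos, hrow, hdiag⟩ := hC
  obtain ⟨hrow0, hrow1, hC01, hC10⟩ := sdf_rows hn ⟨hpos, hrow, hdiag⟩ hgr h0 h1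
  obtain ⟨hp0, hp1, hpS⟩ := sdf_pt_apply (α := α) h0 h1
  have hne : i0 ≠ i1 := by intro h; rw [h, h1] at h0; omega
  funext i
  show (∑ j, C j i * (pt n α j - pt n α j ^ 2)) + pt n α i ^ 2 = pt n α i
  have hsum := sdf_split hn h0 h1 (fun j => C j i * (pt n α j - pt n α j ^ 2))
  have hSzero : ∑ j ∈ Finset.univ.filter (fun j : Fin n => 2 ≤ (j : ℕ)),
      C j i * (pt n α j - pt n α j ^ 2) = 0 := by
    apply Finset.sum_eq_zero
    intro j hj
    have hj2 : 2 ≤ (j : ℕ) := (Finset.mem_filter.mp hj).2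
    rw [hpS j hj2]
    ring
  rw [hSzero] at hsum
  rw [hsum, hp0, hp1]
  rcases lt_or_ge (i : ℕ) 2 with hi | hi
  · rcases (by omega : (i : ℕ) = 0 ∨ (i : ℕ) = 1) with hi0 | hi1
    · have : i = i0 := by rw [Fin.ext_iff]; omega
      rw [this]
      rw [hdiag i0, hC10, hp0]
      ring
    · have : i = i1 := by rw [Fin.ext_iff]; omega
      rw [this]
      rw [hdiag i1, hC01, hp1]
      ring
  · have hni1 : i ≠ i1 := by intro h; rw [h, h1] at hi; omega
    have hni0 : i ≠ i0 := by intro h; rw [h, h0] at hi; omega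
    rw [hrow0 i hni1, hrow1 i hni0, hpS i hi]
    ring
lemma sdf_vertex_fixed (hC : IsRIM C) (i : Fin n) : DF C (vertex n i) = vertex n i := by
  funext j
  show (∑ k, C k j * (vertex n i k - vertex n i k ^ 2)) + vertex n i j ^ 2 = vertex n i j
  have hz : ∀ k, vertex n i k - vertex n i k ^ 2 = 0 := by
    intro k
    simp only [vertex]
    split <;> ring
  rw [Finset.sum_eq_zero (fun k _ => by rw [hz k]; ring)]
  simp only [vertex]
  split <;> ring

lemma sdf_powfix (hfix : DF C x = x) :
    ∀ k (i : Fin n), x i - x i ^ 2 = ∑ j, (C ^ k) j i * (x j - x j ^ 2) := by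
  have heq : ∀ i, x i - x i ^ 2 = ∑ j, C j i * (x j - x j ^ 2) := by
    intro i
    have := congrFun hfix i
    simp only [DF] at this
    linarith
  intro k
  induction k with
  | zero =>
    intro i
    simp [Matrix.one_apply]
  | succ k ih =>
    intro i
    have e : ∀ j, (C ^ (k + 1)) j i = ∑ l, C j l * (C ^ k) l i := by
      intro j
      rw [pow_succ', Matrix.mul_apply]
    calc x i - x i ^ 2 = ∑ l, (C ^ k) l i * (x l - x l ^ 2) := ih i
      _ = ∑ l, (C ^ k) l i * ∑ j, C j l * (x j - x j ^ 2) := by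
          exact Finset.sum_congr rfl fun l _ => by rw [← heq l]
      _ = ∑ l, ∑ j, (C ^ k) l i * (C j l * (x j - x j ^ 2)) := by
          exact Finset.sum_congr rfl fun l _ => Finset.mul_sum _ _ _
      _ = ∑ j, ∑ l, (C ^ k) l i * (C j l * (x j - x j ^ 2)) := Finset.sum_comm
      _ = ∑ j, (C ^ (k + 1)) j i * (x j - x j ^ 2) := by
          apply Finset.sum_congr rfl
          intro j _
          rw [e j, Finset.sum_mul]
          exact Finset.sum_congr rfl fun l _ => by ring

lemma sdf_part2 (hn : 3 ≤ n) (hC : IsRIM C)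
    (hgr : ∀ i : Fin n, GloballyReachable C i ↔ (i : ℕ) < 2)
    {i0 i1 : Fin n} (h0 : (i0 : ℕ) = 0) (h1 : (i1 : ℕ) = 1)
    (x : Fin n → ℝ) (hx : x ∈ simplex n) :
    DF C x = x ↔
      (∃ α ∈ Set.Icc (0 : ℝ) 1, x = pt n α) ∨
      (∃ i : Fin n, 2 ≤ (i : ℕ) ∧ x = vertex n i) := by
  classical
  obtain ⟨hpos, hrow, hdiag⟩ := hC
  obtain ⟨hrow0, hrow1, hC01, hC10⟩ := sdf_rows hn ⟨hpos, hrow, hdiag⟩ hgr h0 h1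
  obtain ⟨m, hm1, δ, hδ0, hδ1, hδ⟩ := sdf_m hn ⟨hpos, hrow, hdiag⟩ hgr h0 h1
  constructor
  · intro hfix
    obtain ⟨hx0, hxsum⟩ := hx
    have hx1 : ∀ i, x i ≤ 1 := sdf_simplex_le_one ⟨hx0, hxsum⟩
    set y : Fin n → ℝ := fun i => x i - x i ^ 2 with hy
    have hy0 : ∀ i, 0 ≤ y i := by
      intro i
      have := mul_nonneg (hx0 i) (sub_nonneg.mpr (hx1 i))
      show 0 ≤ x i - x i ^ 2
      nlinarith
    have hpf := sdf_powfix hfix m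
    -- h i0 m = 1 and h i1 m = 1
    have hcl := sdf_closed h0 h1 hrow0 hrow1
    have htail := fun (j : Fin n) => sdf_htail hn hpos hrow h0 h1 m j
    have hfullsum : ∀ i : Fin n, y i = ∑ j, (C ^ m) j i * y j := fun i => hpf i
    -- sum over S of y
    have key : ∑ j, y j * (1 - ((C ^ m) j i0 + (C ^ m) j i1))
        = ∑ i ∈ Finset.univ.filter (fun i : Fin n => 2 ≤ (i : ℕ)), y i := by
      calc ∑ j, y j * (1 - ((C ^ m) j i0 + (C ^ m) j i1))
          = ∑ j, y j * ∑ i ∈ Finset.univ.filter (fun i : Fin n => 2 ≤ (i : ℕ)), (C ^ m) j i := by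
            exact Finset.sum_congr rfl fun j _ => by rw [htail j]
        _ = ∑ j, ∑ i ∈ Finset.univ.filter (fun i : Fin n => 2 ≤ (i : ℕ)),
              y j * (C ^ m) j i := by
            exact Finset.sum_congr rfl fun j _ => Finset.mul_sum _ _ _
        _ = ∑ i ∈ Finset.univ.filter (fun i : Fin n => 2 ≤ (i : ℕ)), ∑ j,
              y j * (C ^ m) j i := Finset.sum_comm
        _ = ∑ i ∈ Finset.univ.filter (fun i : Fin n => 2 ≤ (i : ℕ)), y i := by
            apply Finset.sum_congr rfl
            intro i _
            rw [hfullsum i]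
            exact Finset.sum_congr rfl fun j _ => by ring
    have hsplity := sdf_split hn h0 h1 (fun j => y j * (1 - ((C ^ m) j i0 + (C ^ m) j i1)))
    -- closedness: h i0 m = 1
    have hc0 : (C ^ m) i0 i0 + (C ^ m) i0 i1 = 1 := by
      have := htail i0
      have hz : ∑ i ∈ Finset.univ.filter (fun i : Fin n => 2 ≤ (i : ℕ)), (C ^ m) i0 i = 0 :=
        Finset.sum_eq_zero fun i hi => (hcl m i (Finset.mem_filter.mp hi).2).1
      rw [hz] at this
      linarith
    have hc1 : (C ^ m) i1 i0 + (C ^ m) i1 i1 = 1 := by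
      have := htail i1
      have hz : ∑ i ∈ Finset.univ.filter (fun i : Fin n => 2 ≤ (i : ℕ)), (C ^ m) i1 i = 0 :=
        Finset.sum_eq_zero fun i hi => (hcl m i (Finset.mem_filter.mp hi).2).2
      rw [hz] at this
      linarith
    have hzero : ∑ j ∈ Finset.univ.filter (fun j : Fin n => 2 ≤ (j : ℕ)),
        y j * ((C ^ m) j i0 + (C ^ m) j i1) = 0 := by
      have e2 : ∑ j ∈ Finset.univ.filter (fun j : Fin n => 2 ≤ (j : ℕ)),
          (y j * (1 - ((C ^ m) j i0 + (C ^ m) j i1)) )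
          = ∑ j ∈ Finset.univ.filter (fun j : Fin n => 2 ≤ (j : ℕ)), y j
            - ∑ j ∈ Finset.univ.filter (fun j : Fin n => 2 ≤ (j : ℕ)),
              y j * ((C ^ m) j i0 + (C ^ m) j i1) := by
        rw [← Finset.sum_sub_distrib]
        exact Finset.sum_congr rfl fun j _ => by ring
      rw [hc0, hc1] at hsplity
      rw [e2] at hsplity
      rw [key] at hsplity
      linarith
    have hterm : ∀ j ∈ Finset.univ.filter (fun j : Fin n => 2 ≤ (j : ℕ)),
        y j * ((C ^ m) j i0 + (C ^ m) j i1) = 0 := by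
      exact (Finset.sum_eq_zero_iff_of_nonneg (fun j _ => mul_nonneg (hy0 j)
        (add_nonneg (sdf_pow_nonneg hpos m j i0) (sdf_pow_nonneg hpos m j i1)))).mp hzero
    have hx01 : ∀ j : Fin n, 2 ≤ (j : ℕ) → x j = 0 ∨ x j = 1 := by
      intro j hj
      have ht := hterm j (by simp [hj])
      have hd := hδ j hj
      have hyj : y j = 0 := by
        by_contra hne
        have : 0 < y j := lt_of_le_of_ne (hy0 j) (Ne.symm hne)
        nlinarith
      have : x j * (1 - x j) = 0 := by
        show _ = _
        have : x j - x j ^ 2 = 0 := hyj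
        nlinarith
      rcases mul_eq_zero.mp this with h | h
      · exact Or.inl h
      · exact Or.inr (by linarith)
    by_cases hone : ∃ j : Fin n, 2 ≤ (j : ℕ) ∧ x j = 1
    · obtain ⟨j, hj2, hj1⟩ := hone
      exact Or.inr ⟨j, hj2, sdf_simplex_vertex ⟨hx0, hxsum⟩ hj1⟩
    · push_neg at hone
      have hSz : ∀ j : Fin n, 2 ≤ (j : ℕ) → x j = 0 := by
        intro j hj
        rcases hx01 j hj with h | h
        · exact h
        · exact absurd h (hone j hj)
      left
      refine ⟨x i0, ⟨hx0 i0, hx1 i0⟩, ?_⟩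
      have hsx := sdf_split hn h0 h1 x
      have hz : ∑ j ∈ Finset.univ.filter (fun j : Fin n => 2 ≤ (j : ℕ)), x j = 0 :=
        Finset.sum_eq_zero fun j hj => hSz j (Finset.mem_filter.mp hj).2
      rw [hxsum, hz] at hsx
      obtain ⟨hp0, hp1, hpS⟩ := sdf_pt_apply (α := x i0) h0 h1
      funext i
      rcases (by omega : (i : ℕ) = 0 ∨ (i : ℕ) = 1 ∨ 2 ≤ (i : ℕ)) with hi | hi | hi
      · have : i = i0 := by rw [Fin.ext_iff]; omega
        rw [this, hp0]
      · have : i = i1 := by rw [Fin.ext_iff]; omega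
        rw [this, hp1]
        linarith
      · rw [hpS i hi, hSz i hi]
  · intro hfp
    rcases hfp with ⟨α, _, rfl⟩ | ⟨i, _, rfl⟩
    · exact sdf_part1 hn ⟨hpos, hrow, hdiag⟩ hgr h0 h1 α
    · exact sdf_vertex_fixed ⟨hpos, hrow, hdiag⟩ i
lemma sdf_g_nonneg {x : Fin n → ℝ} (hx : x ∈ simplex n) (j : Fin n) :
    0 ≤ x j - x j ^ 2 := by
  have h0 := hx.1 j
  have h1 := sdf_simplex_le_one hx j
  nlinarith

lemma sdf_DF_mem (hC : IsRIM C) {x : Fin n → ℝ} (hx : x ∈ simplex n) :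
    DF C x ∈ simplex n := by
  obtain ⟨hpos, hrow, hdiag⟩ := hC
  constructor
  · intro i
    show 0 ≤ (∑ j, C j i * (x j - x j ^ 2)) + x i ^ 2
    have h1 : 0 ≤ ∑ j, C j i * (x j - x j ^ 2) :=
      Finset.sum_nonneg fun j _ => mul_nonneg (hpos j i) (sdf_g_nonneg hx j)
    nlinarith [sq_nonneg (x i)]
  · show ∑ i, ((∑ j, C j i * (x j - x j ^ 2)) + x i ^ 2) = 1
    rw [Finset.sum_add_distrib]
    have h1 : ∑ i, ∑ j, C j i * (x j - x j ^ 2) = ∑ j, (x j - x j ^ 2) := by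
      rw [Finset.sum_comm]
      apply Finset.sum_congr rfl
      intro j _
      rw [← Finset.sum_mul, hrow j, one_mul]
    rw [h1, ← Finset.sum_add_distrib]
    calc ∑ j, (x j - x j ^ 2 + x j ^ 2) = ∑ j, x j :=
          Finset.sum_congr rfl fun j _ => by ring
      _ = 1 := hx.2

lemma sdf_DF_lt_one (hC : IsRIM C) {x : Fin n → ℝ} (hx : x ∈ simplex n)
    (hlt : ∀ i, x i < 1) : ∀ i, DF C x i < 1 := by
  obtain ⟨hpos, hrow, hdiag⟩ := hC
  have hmem := sdf_DF_mem ⟨hpos, hrow, hdiag⟩ hx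
  intro i
  -- find j ≠ i with 0 < x j
  have hex : ∃ j, j ≠ i ∧ 0 < x j := by
    obtain ⟨j1, hj1⟩ : ∃ j, 0 < x j := by
      by_contra hcon
      push_neg at hcon
      have : ∑ j, x j ≤ 0 := Finset.sum_nonpos fun j _ => hcon j
      rw [hx.2] at this
      linarith
    by_cases hji : j1 = i
    · subst hji
      have hsum : x j1 + ∑ k ∈ Finset.univ.erase j1, x k = 1 := by
        rw [Finset.add_sum_erase Finset.univ x (Finset.mem_univ j1), hx.2]
      have hpos' : 0 < ∑ k ∈ Finset.univ.erase j1, x k := by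
        have := hlt j1; linarith
      obtain ⟨k, hk⟩ : ∃ k ∈ Finset.univ.erase j1, 0 < x k := by
        by_contra hcon
        push_neg at hcon
        have : ∑ k ∈ Finset.univ.erase j1, x k ≤ 0 :=
          Finset.sum_nonpos fun k hk => hcon k hk
        linarith
      exact ⟨k, Finset.ne_of_mem_erase hk.1, hk.2⟩
    · exact ⟨j1, hji, hj1⟩
  obtain ⟨j, hji, hjpos⟩ := hex
  have hDFj : 0 < DF C x j := by
    have h1 : 0 ≤ ∑ l, C l j * (x l - x l ^ 2) :=
      Finset.sum_nonneg fun l _ => mul_nonneg (hpos l j) (sdf_g_nonneg hx l)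
    show 0 < (∑ l, C l j * (x l - x l ^ 2)) + x j ^ 2
    nlinarith
  have hpair : DF C x i + DF C x j ≤ 1 := by
    have h2 := Finset.sum_le_sum_of_subset_of_nonneg
      (Finset.subset_univ ({i, j} : Finset (Fin n))) (fun k _ _ => hmem.1 k)
    rw [Finset.sum_pair (Ne.symm hji), hmem.2] at h2
    exact h2
  linarith

lemma sdf_spread (hC : IsRIM C) {x : ℕ → Fin n → ℝ}
    (hinv : ∀ t, x t ∈ simplex n) (hlt : ∀ t i, x t i < 1)
    (hstep : ∀ t, x (t + 1) = DF C (x t)) :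
    ∀ (k t : ℕ) (j i : Fin n), 0 < x t j → 0 < (C ^ k) j i → 0 < x (t + k) i := by
  obtain ⟨hpos, hrow, hdiag⟩ := hC
  intro k
  induction k with
  | zero =>
    intro t j i hj hk
    rw [pow_zero, Matrix.one_apply] at hk
    by_cases hij : j = i
    · subst hij; simpa using hj
    · rw [if_neg hij] at hk; norm_num at hk
  | succ k ih =>
    intro t j i hj hk
    rw [pow_succ, Matrix.mul_apply] at hk
    obtain ⟨l, hl⟩ : ∃ l, 0 < (C ^ k) j l * C l i := by
      by_contra hcon
      push_neg at hcon
      have : ∑ l, (C ^ k) j l * C l i ≤ 0 := Finset.sum_nonpos fun l _ => hcon l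
      linarith
    have hCk : 0 < (C ^ k) j l := by
      rcases mul_pos_iff.mp hl with ⟨a, b⟩ | ⟨a, b⟩
      · exact a
      · exact absurd b (not_lt.mpr (hpos l i))
    have hCl : 0 < C l i := by
      rcases mul_pos_iff.mp hl with ⟨a, b⟩ | ⟨a, b⟩
      · exact b
      · exact absurd b (not_lt.mpr (hpos l i))
    have hxl : 0 < x (t + k) l := ih t j l hj hCk
    have hxl1 : x (t + k) l < 1 := hlt (t + k) l
    have : x (t + k + 1) i = DF C (x (t + k)) i := by rw [hstep (t + k)]
    show 0 < x (t + k + 1) i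
    rw [this]
    show 0 < (∑ j', C j' i * (x (t + k) j' - x (t + k) j' ^ 2)) + x (t + k) i ^ 2
    have hsingle : C l i * (x (t + k) l - x (t + k) l ^ 2)
        ≤ ∑ j', C j' i * (x (t + k) j' - x (t + k) j' ^ 2) :=
      Finset.single_le_sum
        (fun j' _ => mul_nonneg (hpos j' i) (sdf_g_nonneg (hinv (t + k)) j'))
        (Finset.mem_univ l)
    have hg : 0 < x (t + k) l - x (t + k) l ^ 2 := by nlinarith
    nlinarith [sq_nonneg (x (t + k) i), mul_pos hCl hg]
lemma sdf_swap (w x : Fin n → ℝ) (T : Finset (Fin n)) :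
    ∑ i ∈ T, w i * ((∑ j, C j i * (x j - x j ^ 2)) + x i ^ 2)
      = (∑ j, (x j - x j ^ 2) * ∑ i ∈ T, w i * C j i) + ∑ i ∈ T, w i * x i ^ 2 := by
  calc ∑ i ∈ T, w i * ((∑ j, C j i * (x j - x j ^ 2)) + x i ^ 2)
      = ∑ i ∈ T, ((∑ j, (x j - x j ^ 2) * (w i * C j i)) + w i * x i ^ 2) := by
        apply Finset.sum_congr rfl
        intro i _
        rw [mul_add, Finset.mul_sum]
        congr 1
        exact Finset.sum_congr rfl fun j _ => by ring
    _ = (∑ i ∈ T, ∑ j, (x j - x j ^ 2) * (w i * C j i)) + ∑ i ∈ T, w i * x i ^ 2 :=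
        Finset.sum_add_distrib
    _ = (∑ j, ∑ i ∈ T, (x j - x j ^ 2) * (w i * C j i)) + ∑ i ∈ T, w i * x i ^ 2 := by
        rw [Finset.sum_comm]
    _ = (∑ j, (x j - x j ^ 2) * ∑ i ∈ T, w i * C j i) + ∑ i ∈ T, w i * x i ^ 2 := by
        congr 1
        exact Finset.sum_congr rfl fun j _ => by rw [Finset.mul_sum]

set_option maxHeartbeats 1000000 in
lemma sdf_part3 (hn : 3 ≤ n) (hC : IsRIM C)
    (hgr : ∀ i : Fin n, GloballyReachable C i ↔ (i : ℕ) < 2)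
    {i0 i1 : Fin n} (h0 : (i0 : ℕ) = 0) (h1 : (i1 : ℕ) = 1)
    (x : ℕ → Fin n → ℝ) (hx0mem : x 0 ∈ simplex n)
    (hnv : ∀ i, x 0 ≠ vertex n i) (hstep : ∀ t, x (t + 1) = DF C (x t)) :
    ∃ α ∈ Set.Icc (0 : ℝ) 1, ∃ M > (0 : ℝ), ∃ ρ ∈ Set.Ioo (0 : ℝ) 1,
      ∀ t, ‖x t - pt n α‖ ≤ M * ρ ^ t := by
  classical
  obtain ⟨hpos, hrow, hdiag⟩ := hC
  obtain ⟨hrow0, hrow1, hC01, hC10⟩ := sdf_rows hn ⟨hpos, hrow, hdiag⟩ hgr h0 h1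
  obtain ⟨p, mr, θ, hmr1, hθ0, hθ1, hpbd, hθp⟩ := sdf_p hn ⟨hpos, hrow, hdiag⟩ hgr h0 h1
  set S := Finset.univ.filter (fun i : Fin n => 2 ≤ (i : ℕ)) with hS
  -- basic invariants
  have hinv : ∀ t, x t ∈ simplex n := by
    intro t
    induction t with
    | zero => exact hx0mem
    | succ t ih => rw [hstep t]; exact sdf_DF_mem ⟨hpos, hrow, hdiag⟩ ih
  have hlt : ∀ t i, x t i < 1 := by
    intro t
    induction t with
    | zero =>
      intro i
      rcases lt_or_ge (x 0 i) 1 with h | h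
      · exact h
      · have : x 0 i = 1 := le_antisymm (sdf_simplex_le_one hx0mem i) h
        exact absurd (sdf_simplex_vertex hx0mem this) (hnv i)
    | succ t ih => rw [hstep t]; exact sdf_DF_lt_one ⟨hpos, hrow, hdiag⟩ (hinv t) ih
  have hnn : ∀ t i, 0 ≤ x t i := fun t => (hinv t).1
  have hsum1 : ∀ t, ∑ i, x t i = 1 := fun t => (hinv t).2
  have hg0 : ∀ t j, 0 ≤ x t j - x t j ^ 2 := fun t => sdf_g_nonneg (hinv t)
  have hgle : ∀ t j, x t j - x t j ^ 2 ≤ x t j := by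
    intro t j
    nlinarith [sq_nonneg (x t j)]
  have hDF : ∀ t i, x (t + 1) i = (∑ j, C j i * (x t j - x t j ^ 2)) + x t i ^ 2 := by
    intro t i
    rw [hstep t]
    rfl
  set s : ℕ → ℝ := fun t => ∑ i ∈ S, x t i with hs
  have hsplitx : ∀ t, x t i0 + x t i1 + s t = 1 := by
    intro t
    have h2 := sdf_split hn h0 h1 (x t)
    rw [← hS] at h2
    rw [hsum1 t] at h2
    have h3 : s t = ∑ i ∈ S, x t i := rfl
    linarith
  have hs0 : ∀ t, 0 ≤ s t := fun t => Finset.sum_nonneg fun i _ => hnn t i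
  have hsle1 : ∀ t, s t ≤ 1 := by
    intro t
    have h2 := hsplitx t
    have h3 := hnn t i0
    have h4 := hnn t i1
    linarith
  have hxles : ∀ t, ∀ i ∈ S, x t i ≤ s t := by
    intro t i hi
    exact Finset.single_le_sum (fun j _ => hnn t j) hi
  -- coefficient facts
  have hcoef0 : ∀ (w : Fin n → ℝ), ∑ i ∈ S, w i * C i0 i = 0 := by
    intro w
    apply Finset.sum_eq_zero
    intro i hi
    rw [hS] at hi
    have hi2 : 2 ≤ (i : ℕ) := (Finset.mem_filter.mp hi).2
    rw [hrow0 i (by intro h; rw [h, h1] at hi2; omega), mul_zero]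
  have hcoef1 : ∀ (w : Fin n → ℝ), ∑ i ∈ S, w i * C i1 i = 0 := by
    intro w
    apply Finset.sum_eq_zero
    intro i hi
    rw [hS] at hi
    have hi2 : 2 ≤ (i : ℕ) := (Finset.mem_filter.mp hi).2
    rw [hrow1 i (by intro h; rw [h, h0] at hi2; omega), mul_zero]
  have hrowS : ∀ j : Fin n, ∑ i ∈ S, C j i ≤ 1 := by
    intro j
    have h2 : ∑ i ∈ S, C j i ≤ ∑ i, C j i :=
      Finset.sum_le_sum_of_subset_of_nonneg (Finset.subset_univ S) (fun i _ _ => hpos j i)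
    rw [hrow j] at h2
    exact h2
  -- monotonicity of s
  have hsmono : ∀ t, s (t + 1) ≤ s t := by
    intro t
    have hc0 := hcoef0 (fun _ => (1 : ℝ))
    have hc1 := hcoef1 (fun _ => (1 : ℝ))
    simp only [one_mul] at hc0 hc1
    have hswap := sdf_swap (C := C) (fun _ => (1 : ℝ)) (x t) S
    simp only [one_mul] at hswap
    have e2 : s (t + 1)
        = (∑ j, (x t j - x t j ^ 2) * ∑ i ∈ S, C j i) + ∑ i ∈ S, x t i ^ 2 := by
      have e3 : s (t + 1) = ∑ i ∈ S, x (t + 1) i := rfl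
      rw [e3, ← hswap]
      exact Finset.sum_congr rfl fun i _ => by rw [hDF t i]
    have hsplitA := sdf_split hn h0 h1 (fun j => (x t j - x t j ^ 2) * ∑ i ∈ S, C j i)
    rw [← hS] at hsplitA
    rw [hc0, hc1, mul_zero, mul_zero] at hsplitA
    have hbound : ∑ j ∈ S, (x t j - x t j ^ 2) * ∑ i ∈ S, C j i
        ≤ ∑ j ∈ S, (x t j - x t j ^ 2) := by
      apply Finset.sum_le_sum
      intro j _
      calc (x t j - x t j ^ 2) * ∑ i ∈ S, C j i ≤ (x t j - x t j ^ 2) * 1 :=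
            mul_le_mul_of_nonneg_left (hrowS j) (hg0 t j)
        _ = x t j - x t j ^ 2 := mul_one _
    have hfin : (∑ j ∈ S, (x t j - x t j ^ 2)) + ∑ i ∈ S, x t i ^ 2 = s t := by
      have e4 : s t = ∑ i ∈ S, x t i := rfl
      rw [e4, ← Finset.sum_add_distrib]
      exact Finset.sum_congr rfl fun j _ => by ring
    linarith
  have hsanti : ∀ t t', t ≤ t' → s t' ≤ s t := by
    intro t t' htt
    exact antitone_nat_of_succ_le hsmono htt
  -- Lyapunov function L
  set L : ℕ → ℝ := fun t => ∑ i ∈ S, p i * x t i with hL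
  have hpS : ∀ i ∈ S, 1 ≤ p i ∧ p i ≤ mr := by
    intro i hi
    rw [hS] at hi
    exact hpbd i (Finset.mem_filter.mp hi).2
  have hsL : ∀ t, s t ≤ L t := by
    intro t
    apply Finset.sum_le_sum
    intro i hi
    calc x t i = 1 * x t i := (one_mul _).symm
      _ ≤ p i * x t i := mul_le_mul_of_nonneg_right (hpS i hi).1 (hnn t i)
  have hL0 : ∀ t, 0 ≤ L t := fun t => le_trans (hs0 t) (hsL t)
  have hLm : ∀ t, L t ≤ mr * s t := by
    intro t
    have e4 : s t = ∑ i ∈ S, x t i := rfl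
    rw [e4, Finset.mul_sum]
    apply Finset.sum_le_sum
    intro i hi
    exact mul_le_mul_of_nonneg_right (hpS i hi).2 (hnn t i)
  have hLcontr : ∀ t, L (t + 1) ≤ θ * L t + (1 - θ) * (s t * L t) := by
    intro t
    have hswap := sdf_swap (C := C) p (x t) S
    have e2 : L (t + 1)
        = (∑ j, (x t j - x t j ^ 2) * ∑ i ∈ S, p i * C j i)
          + ∑ i ∈ S, p i * x t i ^ 2 := by
      have e3 : L (t + 1) = ∑ i ∈ S, p i * x (t + 1) i := rfl
      rw [e3, ← hswap]
      exact Finset.sum_congr rfl fun i _ => by rw [hDF t i]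
    have hsplitA := sdf_split hn h0 h1
      (fun j => (x t j - x t j ^ 2) * ∑ i ∈ S, p i * C j i)
    rw [← hS] at hsplitA
    rw [hcoef0 p, hcoef1 p, mul_zero, mul_zero] at hsplitA
    have hq : ∀ j ∈ S, (x t j - x t j ^ 2) * ∑ i ∈ S, p i * C j i
        ≤ θ * ((x t j - x t j ^ 2) * p j) := by
      intro j hj
      have hj2 : 2 ≤ (j : ℕ) := by rw [hS] at hj; exact (Finset.mem_filter.mp hj).2
      have hqle : ∑ i ∈ S, p i * C j i ≤ θ * p j := by
        have h5 := hθp j hj2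
        calc ∑ i ∈ S, p i * C j i = ∑ i ∈ S, C j i * p i :=
              Finset.sum_congr rfl fun i _ => by ring
          _ ≤ θ * p j := h5
      calc (x t j - x t j ^ 2) * ∑ i ∈ S, p i * C j i
          ≤ (x t j - x t j ^ 2) * (θ * p j) :=
            mul_le_mul_of_nonneg_left hqle (hg0 t j)
        _ = θ * ((x t j - x t j ^ 2) * p j) := by ring
    have hbound := Finset.sum_le_sum hq
    rw [← Finset.mul_sum] at hbound
    have hgp : ∑ j ∈ S, (x t j - x t j ^ 2) * p j
        = L t - ∑ i ∈ S, p i * x t i ^ 2 := by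
      have e3 : L t = ∑ i ∈ S, p i * x t i := rfl
      rw [e3, ← Finset.sum_sub_distrib]
      exact Finset.sum_congr rfl fun j _ => by ring
    rw [hgp] at hbound
    have hQ0 : 0 ≤ ∑ i ∈ S, p i * x t i ^ 2 := Finset.sum_nonneg fun i hi =>
      mul_nonneg (le_trans zero_le_one (hpS i hi).1) (sq_nonneg _)
    have hQs : ∑ i ∈ S, p i * x t i ^ 2 ≤ s t * L t := by
      have e3 : L t = ∑ i ∈ S, p i * x t i := rfl
      rw [e3, Finset.mul_sum]
      apply Finset.sum_le_sum
      intro i hi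
      have hxi := hnn t i
      have hpi : 0 ≤ p i := le_trans zero_le_one (hpS i hi).1
      have h2 : p i * x t i ^ 2 = (p i * x t i) * x t i := by ring
      calc p i * x t i ^ 2 = (p i * x t i) * x t i := by ring
        _ ≤ (p i * x t i) * s t :=
            mul_le_mul_of_nonneg_left (hxles t i hi) (mul_nonneg hpi hxi)
        _ = s t * (p i * x t i) := by ring
    have h7 : (1 - θ) * (∑ i ∈ S, p i * x t i ^ 2) ≤ (1 - θ) * (s t * L t) :=
      mul_le_mul_of_nonneg_left hQs (by linarith)
    nlinarith [hbound, e2, hsplitA, h7]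
  -- spreading to get t0
  have ht0 : ∃ t0, 0 < x t0 i0 := by
    obtain ⟨j, hj⟩ : ∃ j, 0 < x 0 j := by
      by_contra hcon
      push_neg at hcon
      have h2 : ∑ j, x 0 j ≤ 0 := Finset.sum_nonpos fun j _ => hcon j
      rw [hsum1 0] at h2
      linarith
    by_cases hji : j = i0
    · exact ⟨0, by rw [← hji]; exact hj⟩
    · obtain ⟨k, _, hk⟩ := ((hgr i0).mpr (by omega)) j hji
      refine ⟨k, ?_⟩
      have h2 := sdf_spread ⟨hpos, hrow, hdiag⟩ hinv hlt hstep k 0 j i0 hj hk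
      simpa using h2
  obtain ⟨t0, ht0pos⟩ := ht0
  have hσ1 : s t0 < 1 := by
    have h2 := hsplitx t0
    have h3 := hnn t0 i1
    linarith
  set ρ0 : ℝ := θ + (1 - θ) * s t0 with hρ0def
  have hρ0lt1 : ρ0 < 1 := by nlinarith [hs0 t0]
  have hρ00 : 0 ≤ ρ0 := by nlinarith [hs0 t0]
  set ρ : ℝ := max ρ0 (1 / 2) with hρdef
  have hρpos : 0 < ρ := lt_of_lt_of_le (by norm_num) (le_max_right _ _)
  have hρlt1 : ρ < 1 := max_lt hρ0lt1 (by norm_num)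
  have hρ0le : ρ0 ≤ ρ := le_max_left _ _
  have hcontr : ∀ t, t0 ≤ t → L (t + 1) ≤ ρ * L t := by
    intro t htt
    have h2 := hLcontr t
    have h3 : s t ≤ s t0 := hsanti t0 t htt
    have h4 : (1 - θ) * (s t * L t) ≤ (1 - θ) * (s t0 * L t) := by
      apply mul_le_mul_of_nonneg_left _ (by linarith)
      exact mul_le_mul_of_nonneg_right h3 (hL0 t)
    have h5 : θ * L t + (1 - θ) * (s t0 * L t) = ρ0 * L t := by rw [hρ0def]; ring
    have h6 : ρ0 * L t ≤ ρ * L t := mul_le_mul_of_nonneg_right hρ0le (hL0 t)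
    linarith
  have hLgeo : ∀ r, L (t0 + r) ≤ ρ ^ r * L t0 := by
    intro r
    induction r with
    | zero => simp
    | succ r ih =>
      have h2 : L (t0 + r + 1) ≤ ρ * L (t0 + r) := hcontr (t0 + r) (by omega)
      have h3 : ρ * L (t0 + r) ≤ ρ * (ρ ^ r * L t0) :=
        mul_le_mul_of_nonneg_left ih (le_of_lt hρpos)
      have h4 : t0 + (r + 1) = t0 + r + 1 := by omega
      rw [h4]
      calc L (t0 + r + 1) ≤ ρ * (ρ ^ r * L t0) := le_trans h2 h3
        _ = ρ ^ (r + 1) * L t0 := by ring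
  set Ms : ℝ := mr / ρ ^ t0 with hMs
  have hMspos : 0 < Ms := div_pos (by linarith) (pow_pos hρpos t0)
  have hsgeo : ∀ t, s t ≤ Ms * ρ ^ t := by
    intro t
    rcases le_or_gt t0 t with htt | htt
    · obtain ⟨r, rfl⟩ : ∃ r, t = t0 + r := ⟨t - t0, by omega⟩
      have h2 : s (t0 + r) ≤ ρ ^ r * L t0 := le_trans (hsL _) (hLgeo r)
      have h3 : L t0 ≤ mr := le_trans (hLm t0) (by nlinarith [hsle1 t0, hs0 t0])
      have h4 : ρ ^ r * L t0 ≤ ρ ^ r * mr :=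
        mul_le_mul_of_nonneg_left h3 (pow_nonneg (le_of_lt hρpos) r)
      have h5 : Ms * ρ ^ (t0 + r) = mr * ρ ^ r := by
        rw [hMs, pow_add]
        field_simp
      rw [h5]
      linarith
    · have h2 : ρ ^ t0 ≤ ρ ^ t :=
        pow_le_pow_of_le_one (le_of_lt hρpos) (le_of_lt hρlt1) (by omega)
      have h3 : (1 : ℝ) ≤ Ms * ρ ^ t := by
        rw [hMs, div_mul_eq_mul_div, le_div_iff₀ (pow_pos hρpos t0)]
        nlinarith [pow_nonneg (le_of_lt hρpos) t]
      linarith [hsle1 t]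
  -- recurrence for coordinate i0
  have hrecur : ∀ t, x (t + 1) i0
      = (x t i1 - x t i1 ^ 2) + x t i0 ^ 2
        + ∑ j ∈ S, C j i0 * (x t j - x t j ^ 2) := by
    intro t
    rw [hDF t i0]
    have hsp := sdf_split hn h0 h1 (fun j => C j i0 * (x t j - x t j ^ 2))
    rw [← hS] at hsp
    rw [hdiag i0, hC10] at hsp
    rw [hsp]
    ring
  have hrr : ∀ t, 0 ≤ ∑ j ∈ S, C j i0 * (x t j - x t j ^ 2)
      ∧ ∑ j ∈ S, C j i0 * (x t j - x t j ^ 2) ≤ s t := by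
    intro t
    constructor
    · exact Finset.sum_nonneg fun j _ => mul_nonneg (hpos j i0) (hg0 t j)
    · have e4 : s t = ∑ i ∈ S, x t i := rfl
      rw [e4]
      apply Finset.sum_le_sum
      intro j _
      have hCle : C j i0 ≤ 1 := by
        have h2 := Finset.single_le_sum (f := fun i => C j i) (fun i _ => hpos j i)
          (Finset.mem_univ i0)
        rw [hrow j] at h2
        exact h2
      calc C j i0 * (x t j - x t j ^ 2) ≤ 1 * (x t j - x t j ^ 2) :=
            mul_le_mul_of_nonneg_right hCle (hg0 t j)
        _ = x t j - x t j ^ 2 := one_mul _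
        _ ≤ x t j := hgle t j
  have hdiff : ∀ t, |x (t + 1) i0 - x t i0| ≤ 2 * (Ms * ρ ^ t) := by
    intro t
    have heq : x (t + 1) i0 - x t i0
        = (x t i1 - x t i0) * s t + ∑ j ∈ S, C j i0 * (x t j - x t j ^ 2) := by
      have h2 := hrecur t
      have h3 := hsplitx t
      linear_combination h2 + (x t i0 - x t i1) * h3
    have habs1 : |x t i1 - x t i0| ≤ 1 := by
      rw [abs_le]
      have h2 := hnn t i0
      have h3 := hnn t i1
      have h4 := le_of_lt (hlt t i0)
      have h5 := le_of_lt (hlt t i1)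
      constructor <;> linarith
    have hR := hrr t
    calc |x (t + 1) i0 - x t i0|
        = |(x t i1 - x t i0) * s t + ∑ j ∈ S, C j i0 * (x t j - x t j ^ 2)| := by
          rw [heq]
      _ ≤ |(x t i1 - x t i0) * s t| + |∑ j ∈ S, C j i0 * (x t j - x t j ^ 2)| :=
          abs_add_le _ _
      _ = |x t i1 - x t i0| * s t + ∑ j ∈ S, C j i0 * (x t j - x t j ^ 2) := by
          rw [abs_mul, abs_of_nonneg (hs0 t), abs_of_nonneg hR.1]
      _ ≤ 1 * s t + s t := add_le_add
          (mul_le_mul_of_nonneg_right habs1 (hs0 t)) hR.2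
      _ = 2 * s t := by ring
      _ ≤ 2 * (Ms * ρ ^ t) := by linarith [hsgeo t]
  -- summability and the limit α
  set d : ℕ → ℝ := fun k => x (k + 1) i0 - x k i0 with hd
  have hdnorm : ∀ k, ‖d k‖ ≤ (2 * Ms) * ρ ^ k := by
    intro k
    have e5 : d k = x (k + 1) i0 - x k i0 := rfl
    rw [e5, Real.norm_eq_abs]
    calc |x (k + 1) i0 - x k i0| ≤ 2 * (Ms * ρ ^ k) := hdiff k
      _ = (2 * Ms) * ρ ^ k := by ring
  have hgeom : Summable (fun k : ℕ => (2 * Ms) * ρ ^ k) :=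
    (summable_geometric_of_lt_one (le_of_lt hρpos) hρlt1).mul_left _
  have hsummable : Summable d := Summable.of_norm_bounded hgeom hdnorm
  set α : ℝ := x 0 i0 + ∑' k, d k with hα
  have htail : ∀ t, α - x t i0 = ∑' k, d (k + t) := by
    intro t
    have h2 := Summable.sum_add_tsum_nat_add (f := d) t hsummable
    have h3 : ∑ k ∈ Finset.range t, d k = x t i0 - x 0 i0 := by
      have h4 := Finset.sum_range_sub (f := fun k => x k i0) t
      exact h4
    rw [hα]
    linarith
  have htailbd : ∀ t, |α - x t i0| ≤ (2 * Ms / (1 - ρ)) * ρ ^ t := by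
    intro t
    have hshift : Summable (fun k => d (k + t)) := (summable_nat_add_iff t).mpr hsummable
    have hshiftnorm : Summable (fun k => ‖d (k + t)‖) := hshift.abs
    have hgeo' : Summable (fun k : ℕ => ((2 * Ms) * ρ ^ t) * ρ ^ k) :=
      (summable_geometric_of_lt_one (le_of_lt hρpos) hρlt1).mul_left _
    calc |α - x t i0| = |∑' k, d (k + t)| := by rw [htail t]
      _ ≤ ∑' k, ‖d (k + t)‖ := by
          rw [← Real.norm_eq_abs]
          exact norm_tsum_le_tsum_norm hshiftnorm
      _ ≤ ∑' k, ((2 * Ms) * ρ ^ t) * ρ ^ k := by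
          refine Summable.tsum_le_tsum (fun k => ?_) hshiftnorm hgeo'
          calc ‖d (k + t)‖ ≤ (2 * Ms) * ρ ^ (k + t) := hdnorm (k + t)
            _ = ((2 * Ms) * ρ ^ t) * ρ ^ k := by rw [pow_add]; ring
      _ = ((2 * Ms) * ρ ^ t) * (1 - ρ)⁻¹ := by
          rw [tsum_mul_left, tsum_geometric_of_lt_one (le_of_lt hρpos) hρlt1]
      _ = (2 * Ms / (1 - ρ)) * ρ ^ t := by
          field_simp
  have h1ρ : 0 < 1 - ρ := by linarith
  have hconv : Filter.Tendsto (fun t => x t i0) Filter.atTop (nhds α) := by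
    have habs : Filter.Tendsto (fun t => |x t i0 - α|) Filter.atTop (nhds 0) := by
      have hb : ∀ t, |x t i0 - α| ≤ (2 * Ms / (1 - ρ)) * ρ ^ t := fun t => by
        rw [abs_sub_comm]; exact htailbd t
      have h2 : Filter.Tendsto (fun t : ℕ => (2 * Ms / (1 - ρ)) * ρ ^ t)
          Filter.atTop (nhds 0) := by
        have h3 := tendsto_pow_atTop_nhds_zero_of_lt_one (le_of_lt hρpos) hρlt1
        simpa using h3.const_mul (2 * Ms / (1 - ρ))
      exact squeeze_zero (fun t => abs_nonneg _) hb h2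
    rw [tendsto_iff_dist_tendsto_zero]
    simpa [Real.dist_eq] using habs
  have hαmem : α ∈ Set.Icc (0 : ℝ) 1 :=
    isClosed_Icc.mem_of_tendsto hconv
      (Filter.Eventually.of_forall fun t => ⟨hnn t i0, le_of_lt (hlt t i0)⟩)
  have hdivpos : 0 < 2 * Ms / (1 - ρ) := div_pos (by linarith) h1ρ
  refine ⟨α, hαmem, 2 * Ms / (1 - ρ) + Ms + 1, by linarith, ρ, ⟨hρpos, hρlt1⟩, ?_⟩
  intro t
  have hpowpos : (0 : ℝ) ≤ ρ ^ t := pow_nonneg (le_of_lt hρpos) t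
  have hMbd : 0 ≤ (2 * Ms / (1 - ρ) + Ms + 1) * ρ ^ t := by positivity
  apply (pi_norm_le_iff_of_nonneg hMbd).mpr
  intro i
  rw [Pi.sub_apply, Real.norm_eq_abs]
  obtain ⟨hpt0, hpt1, hptS⟩ := sdf_pt_apply (α := α) h0 h1
  rcases (by omega : (i : ℕ) = 0 ∨ (i : ℕ) = 1 ∨ 2 ≤ (i : ℕ)) with hi | hi | hi
  · have he : i = i0 := by rw [Fin.ext_iff]; omega
    rw [he, hpt0, abs_sub_comm]
    have h2 := htailbd t
    nlinarith [mul_nonneg (le_of_lt hMspos) hpowpos]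
  · have he : i = i1 := by rw [Fin.ext_iff]; omega
    rw [he, hpt1]
    have he2 : x t i1 - (1 - α) = (α - x t i0) + (-(s t)) := by
      have h3 := hsplitx t
      linarith
    rw [he2]
    have h4 : |(α - x t i0) + (-(s t))| ≤ |α - x t i0| + |(-(s t))| := abs_add_le _ _
    rw [abs_neg, abs_of_nonneg (hs0 t)] at h4
    have h5 := htailbd t
    have h6 := hsgeo t
    nlinarith [hpowpos]
  · rw [hptS i hi, sub_zero, abs_of_nonneg (hnn t i)]
    have h2 : x t i ≤ s t := hxles t i (by rw [hS]; simp [hi])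
    have h3 := hsgeo t
    nlinarith [hpowpos, mul_nonneg (le_of_lt hdivpos) hpowpos]

theorem stmt10 {n : ℕ} (hn : 3 ≤ n) (C : Matrix (Fin n) (Fin n) ℝ) (hC : IsRIM C)
    (hred : ¬ Irred C)
    (hgr : ∀ i : Fin n, GloballyReachable C i ↔ (i : ℕ) < 2) :
    (∀ α ∈ Set.Icc (0 : ℝ) 1, DF C (pt n α) = pt n α) ∧
    (∀ x ∈ simplex n,
      (DF C x = x ↔
        (∃ α ∈ Set.Icc (0 : ℝ) 1, x = pt n α) ∨
        (∃ i : Fin n, 2 ≤ (i : ℕ) ∧ x = vertex n i))) ∧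
    (∀ x : ℕ → Fin n → ℝ, x 0 ∈ simplex n → (∀ i, x 0 ≠ vertex n i) →
      (∀ t, x (t + 1) = DF C (x t)) →
      ∃ α ∈ Set.Icc (0 : ℝ) 1, ∃ M > (0 : ℝ), ∃ ρ ∈ Set.Ioo (0 : ℝ) 1,
        ∀ t, ‖x t - pt n α‖ ≤ M * ρ ^ t) := by
  have h0n : 0 < n := by omega
  have h1n : 1 < n := by omega
  refine ⟨?_, ?_, ?_⟩
  · intro α _
    exact sdf_part1 hn hC hgr (i0 := ⟨0, h0n⟩) (i1 := ⟨1, h1n⟩) rfl rfl α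
  · intro x hx
    exact sdf_part2 hn hC hgr (i0 := ⟨0, h0n⟩) (i1 := ⟨1, h1n⟩) rfl rfl x hx
  · intro x hx hnv hstep
    exact sdf_part3 hn hC hgr (i0 := ⟨0, h0n⟩) (i1 := ⟨1, h1n⟩) rfl rfl x hx hnv hstep
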